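/- Let h* ∈ ℝ^p with support I = supp(h*) of cardinality s, and let Σ be a positive definite matrix satisfying the restricted eigenvalue condition with parameter ψ > 0 relative to I. Let r > 0 satisfy 2√s·r/ψ ≤ 1/2. Then for every h ∈ ℝ^p with ‖h‖₁ = 1 and ‖Σ^{1/2}h‖₂ ≤ r, there exists g ∈ ℝ^p with ‖g‖_∞ ≤ 1 and ⟨g,h*⟩ = ‖h*‖₁ such that ⟨g,h⟩ ≥ 1/2. -/

import Mathlib

noncomputable section

section
open scoped ComplexOrder

/-- The square root of a positive semidefinite matrix (removed from Mathlib; restored here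
with its former definition). -/
def Matrix.PosSemidef.sqrt {n 𝕜 : Type*} [Fintype n] [RCLike 𝕜] [DecidableEq n]
    {A : Matrix n n 𝕜} (hA : A.PosSemidef) : Matrix n n 𝕜 :=
  hA.1.eigenvectorUnitary.1 * Matrix.diagonal ((↑) ∘ (√·) ∘ hA.1.eigenvalues) *
    (star hA.1.eigenvectorUnitary : Matrix n n 𝕜)

end

lemma sign_abs_le' (x : ℝ) : |Real.sign x| ≤ 1 := by
  rcases lt_trichotomy x 0 with hx|hx|hx
  · simp [Real.sign_of_neg hx]
  · simp [hx, Real.sign_zero]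
  · simp [Real.sign_of_pos hx]

lemma sign_mul_self' (x : ℝ) : Real.sign x * x = |x| := by
  rcases lt_trichotomy x 0 with hx|hx|hx
  · simp [Real.sign_of_neg hx, abs_of_neg hx]
  · simp [hx]
  · simp [Real.sign_of_pos hx, abs_of_pos hx]

/-- **Lemma (subdifferential lower bound for the `ℓ₁`-norm under the restricted
eigenvalue condition).**
If `Σ` is positive definite and satisfies the restricted eigenvalue condition with
parameter `ψ` relative to `I = supp(h*)`, `|I| = s`, and `r > 0` satisfies
`2√s r/ψ ≤ 1/2`, then for every `h` with `‖h‖₁ = 1` and `‖Σ^{1/2}h‖₂ ≤ r` there is a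
subgradient `g` of the `ℓ₁`-norm at `h*` (i.e. `‖g‖_∞ ≤ 1` and `⟨g,h*⟩ = ‖h*‖₁`) with
`⟨g,h⟩ ≥ 1/2`. -/
theorem l1_subdifferential_lower_bound
    (p : ℕ) (hstar : Fin p → ℝ) (s : ℕ)
    (hs : s = (Finset.univ.filter fun j => hstar j ≠ 0).card)
    (Sm : Matrix (Fin p) (Fin p) ℝ) (hS : Sm.PosDef)
    (ψ : ℝ) (hψ : 0 < ψ)
    -- restricted eigenvalue condition with parameter `ψ` relative to `I = supp(h*)`
    (hRE : ∀ h : Fin p → ℝ,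
      (∑ j, if hstar j ≠ 0 then 0 else |h j|) ≤
          3 * (∑ j, if hstar j ≠ 0 then |h j| else 0) →
      ψ * Real.sqrt (∑ j, if hstar j ≠ 0 then h j ^ 2 else 0) ≤
        Real.sqrt (∑ j, (hS.posSemidef.sqrt.mulVec h) j ^ 2))
    (r : ℝ) (hr : 0 < r) (hrψ : 2 * Real.sqrt s * r / ψ ≤ 1 / 2) :
    ∀ h : Fin p → ℝ, (∑ j, |h j|) = 1 →
      Real.sqrt (∑ j, (hS.posSemidef.sqrt.mulVec h) j ^ 2) ≤ r →
      ∃ g : Fin p → ℝ, (∀ j, |g j| ≤ 1) ∧ (∑ j, g j * hstar j) = (∑ j, |hstar j|) ∧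
        1 / 2 ≤ ∑ j, g j * h j := by
  classical
  intro h h1 hSig
  set F := Finset.univ.filter (fun j => hstar j ≠ 0) with hF
  have hsplit : (∑ j ∈ F, |h j|) + (∑ j ∈ Fᶜ, |h j|) = 1 := by
    rw [Finset.sum_add_sum_compl]; exact h1
  set a := ∑ j ∈ F, |h j| with ha
  have ha0 : 0 ≤ a := Finset.sum_nonneg fun j _ => abs_nonneg _
  have haF : (∑ j, if hstar j ≠ 0 then |h j| else 0) = a := (Finset.sum_filter _ _).symm
  have hb : (∑ j, if hstar j ≠ 0 then 0 else |h j|) = ∑ j ∈ Fᶜ, |h j| := by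
    rw [hF, Finset.compl_filter, Finset.sum_filter]
    exact Finset.sum_congr rfl fun j _ => by by_cases hj : hstar j ≠ 0 <;> simp [hj]
  have key : a ≤ 1 / 4 := by
    by_cases hc : (∑ j, if hstar j ≠ 0 then 0 else |h j|) ≤
        3 * (∑ j, if hstar j ≠ 0 then |h j| else 0)
    · have h2 : ψ * Real.sqrt (∑ j, if hstar j ≠ 0 then h j ^ 2 else 0) ≤ r :=
        (hRE h hc).trans hSig
      have hQ : (∑ j, if hstar j ≠ 0 then h j ^ 2 else 0) = ∑ j ∈ F, h j ^ 2 :=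
        (Finset.sum_filter _ _).symm
      rw [hQ] at h2
      have hcs : a ^ 2 ≤ (s : ℝ) * ∑ j ∈ F, h j ^ 2 := by
        have h3 := Finset.sum_mul_sq_le_sq_mul_sq F (fun _ => (1:ℝ)) (fun j => |h j|)
        simpa [hs, sq_abs, Finset.sum_const, nsmul_eq_mul, one_mul] using h3
      have hsq : a ≤ Real.sqrt s * Real.sqrt (∑ j ∈ F, h j ^ 2) := by
        rw [← Real.sqrt_mul (Nat.cast_nonneg s)]
        calc a = Real.sqrt (a ^ 2) := by rw [Real.sqrt_sq ha0]
          _ ≤ Real.sqrt ((s : ℝ) * ∑ j ∈ F, h j ^ 2) := Real.sqrt_le_sqrt hcs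
      have hr2 : Real.sqrt (∑ j ∈ F, h j ^ 2) ≤ r / ψ := by
        rw [le_div_iff₀ hψ]
        calc Real.sqrt (∑ j ∈ F, h j ^ 2) * ψ
            = ψ * Real.sqrt (∑ j ∈ F, h j ^ 2) := mul_comm _ _
          _ ≤ r := h2
      have h4 : a ≤ Real.sqrt s * (r / ψ) :=
        hsq.trans (mul_le_mul_of_nonneg_left hr2 (Real.sqrt_nonneg _))
      have h5 : 2 * Real.sqrt s * r / ψ = 2 * (Real.sqrt s * (r / ψ)) := by ring
      rw [h5] at hrψ
      linarith
    · push_neg at hc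
      rw [hb, haF] at hc
      linarith
  refine ⟨fun j => if hstar j = 0 then Real.sign (h j) else Real.sign (hstar j), ?_, ?_, ?_⟩
  · intro j
    by_cases hj : hstar j = 0 <;> simp [hj, sign_abs_le']
  · refine Finset.sum_congr rfl fun j _ => ?_
    by_cases hj : hstar j = 0 <;> simp [hj, sign_mul_self']
  · have hcompl : (∑ j ∈ Fᶜ, (if hstar j = 0 then Real.sign (h j) else Real.sign (hstar j)) * h j)
        = ∑ j ∈ Fᶜ, |h j| := by
      refine Finset.sum_congr rfl fun j hj => ?_
      have hj0 : hstar j = 0 := by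
        simp only [hF, Finset.mem_compl, Finset.mem_filter, Finset.mem_univ, true_and,
          not_not] at hj
        exact hj
      simp [hj0, sign_mul_self']
    have hFbd : (∑ j ∈ F, -|h j|) ≤
        ∑ j ∈ F, (if hstar j = 0 then Real.sign (h j) else Real.sign (hstar j)) * h j := by
      refine Finset.sum_le_sum fun j _ => ?_
      set gj := if hstar j = 0 then Real.sign (h j) else Real.sign (hstar j) with hgj
      have hg1 : |gj| ≤ 1 := by by_cases hj : hstar j = 0 <;> simp [hgj, hj, sign_abs_le']
      have : |gj * h j| ≤ |h j| := by
        rw [abs_mul]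
        calc |gj| * |h j| ≤ 1 * |h j| := mul_le_mul_of_nonneg_right hg1 (abs_nonneg _)
          _ = |h j| := one_mul _
      linarith [neg_abs_le (gj * h j), this]
    have hneg : (∑ j ∈ F, -|h j|) = -a := by rw [Finset.sum_neg_distrib, ha]
    have hsum : (∑ j, (if hstar j = 0 then Real.sign (h j) else Real.sign (hstar j)) * h j)
        = (∑ j ∈ F, (if hstar j = 0 then Real.sign (h j) else Real.sign (hstar j)) * h j)
          + ∑ j ∈ Fᶜ, (if hstar j = 0 then Real.sign (h j) else Real.sign (hstar j)) * h j :=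
      (Finset.sum_add_sum_compl F _).symm
    have hFbd2 : -a ≤ ∑ j ∈ F, (if hstar j = 0 then Real.sign (h j) else Real.sign (hstar j)) * h j :=
      hneg ▸ hFbd
    rw [hsum, hcompl]
    linarith [hFbd2, hsplit, key]

end
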